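/- For z ∈ ℂ ∖ Λ, the family (−2/(z − m)³)_{m∈Λ} is summable; denote its sum by W(z) = ∑_{m∈Λ} −2/(z − m)³. Then W is analytic on ℂ ∖ Λ, is doubly periodic with W(z + 1) = W(z) = W(z + i) for all z ∈ ℂ ∖ Λ, is odd with W(−z) = −W(z) for all z ∈ ℂ ∖ Λ, and vanishes at the half-lattice points: W(1/2) = W(i/2) = W((1 + i)/2) = 0. -/
import Mathlib


open Complex MeasureTheory Set Filter

noncomputable section

/-- The Gaussian integer lattice point associated to a pair of integers. -/
def latPt (p : ℤ × ℤ) : ℂ := (p.1 : ℂ) + (p.2 : ℂ) * Complex.I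

/-- The open unit square `Q = (0,1) × (0,1)` in `ℂ`. -/
def QSet : Set ℂ := {z : ℂ | z.re ∈ Set.Ioo (0:ℝ) 1 ∧ z.im ∈ Set.Ioo (0:ℝ) 1}

/-- The set `S + Λ` of all translates of points of `S` by lattice points. -/
def SLat (S : Finset ℂ) : Set ℂ := {z : ℂ | ∃ s ∈ S, ∃ p : ℤ × ℤ, z = s + latPt p}

/-- The set of lattice points, as a subset of `ℂ`. -/
def latSet : Set ℂ := {z : ℂ | ∃ p : ℤ × ℤ, z = latPt p}

/-- The function `W = ℘′`, the derivative of the Weierstrass `℘`-function of the lattice. -/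
def Wf (z : ℂ) : ℂ := ∑' p : ℤ × ℤ, -2 / (z - latPt p) ^ 3

lemma latPt_re (p : ℤ × ℤ) : (latPt p).re = p.1 := by simp [latPt]

lemma latPt_im (p : ℤ × ℤ) : (latPt p).im = p.2 := by simp [latPt]

lemma isClosed_latSet : IsClosed latSet := by
  have : latSet = (Complex.re ⁻¹' Set.range ((↑) : ℤ → ℝ)) ∩
      (Complex.im ⁻¹' Set.range ((↑) : ℤ → ℝ)) := by
    ext z
    constructor
    · rintro ⟨p, rfl⟩
      exact ⟨⟨p.1, (latPt_re p).symm⟩, ⟨p.2, (latPt_im p).symm⟩⟩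
    · rintro ⟨⟨a, ha⟩, ⟨b, hb⟩⟩
      refine ⟨(a, b), ?_⟩
      apply Complex.ext <;> simp [latPt, ← ha, ← hb]
  rw [this]
  exact ((Int.isClosedEmbedding_coe_real.isClosed_range).preimage Complex.continuous_re).inter
    ((Int.isClosedEmbedding_coe_real.isClosed_range).preimage Complex.continuous_im)

/-- The sup-style size of a lattice index. -/
def Np (p : ℤ × ℤ) : ℝ := max |(p.1 : ℝ)| |(p.2 : ℝ)|

lemma Np_nonneg (p : ℤ × ℤ) : 0 ≤ Np p := le_trans (abs_nonneg _) (le_max_left _ _)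

lemma Np_le_norm_latPt (p : ℤ × ℤ) : Np p ≤ ‖latPt p‖ := by
  apply max_le
  · rw [← latPt_re p]; exact (Complex.abs_re_le_norm _)
  · rw [← latPt_im p]; exact (Complex.abs_im_le_norm _)

lemma summable_Np : Summable fun p : ℤ × ℤ => (Np p) ^ (-3 : ℝ) := by
  have h := EisensteinSeries.summable_one_div_norm_rpow (k := 3) (by norm_num)
  have h2 := ((finTwoArrowEquiv ℤ).symm.summable_iff
    (f := fun x : Fin 2 → ℤ => ‖x‖ ^ (-3 : ℝ))).mpr h
  refine h2.congr fun p => ?_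
  simp only [Function.comp_apply]
  have hx : ‖(finTwoArrowEquiv ℤ).symm p‖ = Np p := by
    rw [EisensteinSeries.norm_eq_max_natAbs]
    simp only [finTwoArrowEquiv_symm_apply, Matrix.cons_val_zero, Matrix.cons_val_one,
      Matrix.head_cons, Nat.cast_max, Nat.cast_natAbs, Np]
    push_cast [Int.cast_abs]
    rfl
  rw [hx]

lemma norm_term (z c : ℂ) : ‖(-2 : ℂ) / (z - c) ^ 3‖ = 2 / ‖z - c‖ ^ 3 := by
  rw [norm_div, norm_pow, norm_neg]
  norm_num

/-- The key local bound: near any non-lattice point there is a ball on which the terms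
are uniformly dominated by a summable family, and the denominators do not vanish. -/
lemma key (z₀ : ℂ) (hz₀ : z₀ ∉ latSet) :
    ∃ r > 0, ∃ u : ℤ × ℤ → ℝ, Summable u ∧
      (∀ p : ℤ × ℤ, ∀ z ∈ Metric.ball z₀ r, ‖(-2 : ℂ) / (z - latPt p) ^ 3‖ ≤ u p) ∧
      (∀ p : ℤ × ℤ, ∀ z ∈ Metric.ball z₀ r, z - latPt p ≠ 0) := by
  classical
  have hne : latSet.Nonempty := ⟨0, ⟨(0, 0), by simp [latPt]⟩⟩
  have hd : 0 < Metric.infDist z₀ latSet :=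
    (isClosed_latSet.notMem_iff_infDist_pos hne).mp hz₀
  set d := Metric.infDist z₀ latSet with hdd
  set R : ℝ := ‖z₀‖ + d with hR
  have hR0 : 0 < R := by positivity
  -- lower bound for the distance to any lattice point, on the ball
  have hlow : ∀ p : ℤ × ℤ, ∀ z ∈ Metric.ball z₀ (d / 2), d / 2 ≤ ‖z - latPt p‖ := by
    intro p z hz
    rw [Metric.mem_ball] at hz
    have h1 : Metric.infDist z latSet ≤ dist z (latPt p) :=
      Metric.infDist_le_dist_of_mem ⟨p, rfl⟩
    have h2 := Metric.infDist_le_infDist_add_dist (x := z₀) (y := z) (s := latSet)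
    rw [dist_comm] at h2
    rw [dist_eq_norm] at h1
    linarith
  have hnz : ∀ p : ℤ × ℤ, ∀ z ∈ Metric.ball z₀ (d / 2), z - latPt p ≠ 0 := by
    intro p z hz h0
    have := hlow p z hz
    rw [h0, norm_zero] at this
    linarith
  refine ⟨d / 2, by positivity, fun p => if Np p ≤ 2 * R then 2 / (d / 2) ^ 3 else 16 / (Np p) ^ 3,
    ?_, ?_, hnz⟩
  · -- summability of the dominating family
    have hfin : {p : ℤ × ℤ | Np p ≤ 2 * R}.Finite := by
      have : {p : ℤ × ℤ | Np p ≤ 2 * R} ⊆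
          Set.Icc (-⌈2 * R⌉, -⌈2 * R⌉) (⌈2 * R⌉, ⌈2 * R⌉) := by
        intro p hp
        simp only [Set.mem_setOf_eq, Np, max_le_iff] at hp
        have h1 : |(p.1 : ℝ)| ≤ (⌈2 * R⌉ : ℝ) := hp.1.trans (Int.le_ceil _)
        have h2 : |(p.2 : ℝ)| ≤ (⌈2 * R⌉ : ℝ) := hp.2.trans (Int.le_ceil _)
        rw [abs_le] at h1 h2
        rw [Set.mem_Icc, Prod.le_def, Prod.le_def]
        exact ⟨⟨by exact_mod_cast h1.1, by exact_mod_cast h2.1⟩,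
          by exact_mod_cast h1.2, by exact_mod_cast h2.2⟩
      exact Set.Finite.subset (Set.finite_Icc _ _) this
    have hf : Summable fun p : ℤ × ℤ => if Np p ≤ 2 * R then 2 / (d / 2) ^ 3 else 0 := by
      apply summable_of_finite_support
      apply hfin.subset
      intro p hp
      simp only [Function.mem_support] at hp
      by_contra h
      simp only [Set.mem_setOf_eq] at h
      simp [h] at hp
    have hg : Summable fun p : ℤ × ℤ => 16 * (Np p) ^ (-3 : ℝ) := summable_Np.mul_left 16
    refine Summable.of_nonneg_of_le (f := fun p =>
      (if Np p ≤ 2 * R then 2 / (d / 2) ^ 3 else 0) + 16 * (Np p) ^ (-3 : ℝ)) ?_ ?_ (hf.add hg)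
    · intro p
      by_cases h : Np p ≤ 2 * R
      · simp only [h, if_true]; positivity
      · simp only [h, if_false]
        exact div_nonneg (by norm_num) (pow_nonneg (Np_nonneg p) 3)
    · intro p
      by_cases h : Np p ≤ 2 * R
      · simp only [h, if_true]
        have h16 : (0:ℝ) ≤ 16 * (Np p) ^ (-3 : ℝ) :=
          mul_nonneg (by norm_num) (Real.rpow_nonneg (Np_nonneg p) _)
        linarith
      · simp only [h, if_false, zero_add]
        push_neg at h
        have hNp : 0 < Np p := by linarith
        rw [Real.rpow_neg (le_of_lt hNp), show (3:ℝ) = ((3:ℕ):ℝ) by norm_num,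
          Real.rpow_natCast, div_eq_mul_inv]
  · -- the bound
    intro p z hz
    have hlz := hlow p z hz
    rw [Metric.mem_ball] at hz
    rw [norm_term]
    by_cases h : Np p ≤ 2 * R
    · simp only [h, if_true]
      exact div_le_div_of_nonneg_left (by norm_num) (by positivity)
        (pow_le_pow_left₀ (by positivity) hlz 3)
    · simp only [h, if_false]
      push_neg at h
      have hzn : ‖z‖ ≤ R := by
        have h3 := norm_sub_norm_le z z₀
        have h4 : ‖z - z₀‖ < d / 2 := by rwa [← dist_eq_norm]
        simp only [hR]
        linarith
      have hbig : Np p / 2 ≤ ‖z - latPt p‖ := by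
        have h1 := norm_sub_norm_le (latPt p) z
        rw [norm_sub_rev] at h1
        have h2 : Np p ≤ ‖latPt p‖ := Np_le_norm_latPt p
        linarith
      have hNp2 : 0 < Np p / 2 := by linarith
      have hcube : (Np p / 2) ^ 3 ≤ ‖z - latPt p‖ ^ 3 :=
        pow_le_pow_left₀ (by linarith) hbig 3
      calc 2 / ‖z - latPt p‖ ^ 3 ≤ 2 / (Np p / 2) ^ 3 :=
            div_le_div_of_nonneg_left (by norm_num) (by positivity) hcube
        _ = 16 / (Np p) ^ 3 := by field_simp; ring

lemma summable_W (z : ℂ) (hz : z ∉ latSet) :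
    Summable (fun p : ℤ × ℤ => -2 / (z - latPt p) ^ 3) := by
  obtain ⟨r, hr, u, hu, hbound, -⟩ := key z hz
  apply Summable.of_norm
  apply hu.of_nonneg_of_le (fun p => norm_nonneg _)
  intro p
  exact hbound p z (Metric.mem_ball_self hr)

lemma Wper1 (z : ℂ) : Wf (z + 1) = Wf z := by
  unfold Wf
  have := Equiv.tsum_eq (Equiv.prodCongr (Equiv.addRight (1 : ℤ)) (Equiv.refl ℤ))
    (fun p : ℤ × ℤ => -2 / (z + 1 - latPt p) ^ 3)
  rw [← this]
  apply tsum_congr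
  intro p
  congr 1
  simp only [Equiv.prodCongr_apply, Equiv.coe_addRight, Equiv.coe_refl, Prod.map_fst,
    Prod.map_snd, id_eq, latPt]
  push_cast
  ring

lemma WperI (z : ℂ) : Wf (z + Complex.I) = Wf z := by
  unfold Wf
  have := Equiv.tsum_eq (Equiv.prodCongr (Equiv.refl ℤ) (Equiv.addRight (1 : ℤ)))
    (fun p : ℤ × ℤ => -2 / (z + Complex.I - latPt p) ^ 3)
  rw [← this]
  apply tsum_congr
  intro p
  congr 1
  simp only [Equiv.prodCongr_apply, Equiv.coe_addRight, Equiv.coe_refl, Prod.map_fst,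
    Prod.map_snd, id_eq, latPt]
  push_cast
  ring

lemma Wodd (z : ℂ) : Wf (-z) = -Wf z := by
  unfold Wf
  have := Equiv.tsum_eq (Equiv.neg (ℤ × ℤ))
    (fun p : ℤ × ℤ => -2 / (-z - latPt p) ^ 3)
  rw [← this, ← tsum_neg]
  apply tsum_congr
  intro p
  have hl : latPt (-p) = -latPt p := by
    simp only [latPt, Prod.fst_neg, Prod.snd_neg]
    push_cast
    ring
  rw [Equiv.neg_apply, hl, show -z - -latPt p = -(z - latPt p) by ring,
    Odd.neg_pow ⟨1, by norm_num⟩, div_neg]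

/-- summability, analyticity, double periodicity, oddness and the
half-lattice zeros of `W = ℘′`. -/
theorem stmt9 :
    (∀ z ∉ latSet, Summable (fun p : ℤ × ℤ => -2 / (z - latPt p) ^ 3)) ∧
    AnalyticOnNhd ℂ Wf latSetᶜ ∧
    (∀ z ∉ latSet, Wf (z + 1) = Wf z ∧ Wf (z + Complex.I) = Wf z ∧ Wf (-z) = -Wf z) ∧
    Wf (1 / 2) = 0 ∧ Wf (Complex.I / 2) = 0 ∧ Wf ((1 + Complex.I) / 2) = 0 := by
  refine ⟨summable_W, ?_, fun z _ => ⟨Wper1 z, WperI z, Wodd z⟩, ?_, ?_, ?_⟩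
  · -- analyticity
    have hopen : IsOpen latSetᶜ := isClosed_latSet.isOpen_compl
    have hdiff : DifferentiableOn ℂ Wf latSetᶜ := by
      intro z₀ hz₀
      obtain ⟨r, hr, u, hu, hbound, hnz⟩ := key z₀ hz₀
      have hball : DifferentiableOn ℂ Wf (Metric.ball z₀ r) := by
        unfold Wf
        apply differentiableOn_tsum_of_summable_norm hu ?_ Metric.isOpen_ball hbound
        intro p
        apply DifferentiableOn.div (differentiableOn_const _)
        · exact (differentiableOn_id.sub (differentiableOn_const _)).pow 3
        · intro w hw
          exact pow_ne_zero 3 (hnz p w hw)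
      have : DifferentiableAt ℂ Wf z₀ :=
        hball.differentiableAt (Metric.isOpen_ball.mem_nhds (Metric.mem_ball_self hr))
      exact this.differentiableWithinAt
    exact hdiff.analyticOnNhd hopen
  · have h := Wodd (1 / 2)
    have h2 : (-(1/2 : ℂ) + 1) = 1/2 := by norm_num
    have heq : Wf (-(1/2 : ℂ)) = Wf (1/2 : ℂ) :=
      (Wper1 (-(1/2 : ℂ))).symm.trans (congrArg Wf h2)
    rw [heq] at h
    exact add_self_eq_zero.mp (by linear_combination h)
  · have h := Wodd (Complex.I / 2)
    have h2 : (-(Complex.I/2 : ℂ) + Complex.I) = Complex.I/2 := by ring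
    have heq : Wf (-(Complex.I/2 : ℂ)) = Wf (Complex.I/2 : ℂ) :=
      (WperI (-(Complex.I/2 : ℂ))).symm.trans (congrArg Wf h2)
    rw [heq] at h
    exact add_self_eq_zero.mp (by linear_combination h)
  · set x : ℂ := -((1 + Complex.I)/2) with hx
    have h := Wodd ((1 + Complex.I) / 2)
    have h2 : x + 1 + Complex.I = (1 + Complex.I)/2 := by rw [hx]; ring
    have heq : Wf x = Wf ((1 + Complex.I)/2 : ℂ) :=
      ((Wper1 x).symm.trans ((WperI (x + 1)).symm.trans (congrArg Wf h2)))
    rw [show Wf (-((1 + Complex.I) / 2)) = Wf x from rfl, heq] at h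
    exact add_self_eq_zero.mp (by linear_combination h)
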